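/- Let Φ : ℕ → ℝ satisfy Φ(0) = 0 and, for all n ≥ 1, Φ(n) ≤ Φ(n-1) + 1 + (1/n) · Σ_{i=0}^{n-1} Φ(i). Then for all n ≥ 0, Φ(n) ≤ e^{2√n}. -/

import Mathlib

noncomputable def Gfun (x : ℝ) : ℝ := (Real.sqrt x - 1/2) * Real.exp (2 * Real.sqrt x)
noncomputable def Hfun (x : ℝ) : ℝ := (2/3) * (x * Real.sqrt x)

lemma derivG {x : ℝ} (hx : 0 < x) : HasDerivAt Gfun (Real.exp (2 * Real.sqrt x)) x := by
  have hs : Real.sqrt x ≠ 0 := ne_of_gt (Real.sqrt_pos.mpr hx)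
  have h1 : HasDerivAt Real.sqrt (1 / (2 * Real.sqrt x)) x := Real.hasDerivAt_sqrt (ne_of_gt hx)
  have h2 : HasDerivAt (fun y => Real.exp (2 * Real.sqrt y))
      (Real.exp (2 * Real.sqrt x) * (2 * (1 / (2 * Real.sqrt x)))) x := (h1.const_mul 2).exp
  have h3 := (h1.sub_const (1/2)).mul h2
  refine HasDerivAt.congr_deriv h3 ?_
  field_simp
  ring

lemma derivH {x : ℝ} (hx : 0 < x) : HasDerivAt Hfun (Real.sqrt x) x := by
  have hs : Real.sqrt x ≠ 0 := ne_of_gt (Real.sqrt_pos.mpr hx)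
  have hxx : Real.sqrt x * Real.sqrt x = x := Real.mul_self_sqrt hx.le
  have h1 : HasDerivAt Real.sqrt (1 / (2 * Real.sqrt x)) x := Real.hasDerivAt_sqrt (ne_of_gt hx)
  have h3 := ((hasDerivAt_id x).mul h1).const_mul (2/3 : ℝ)
  refine HasDerivAt.congr_deriv h3 ?_
  field_simp
  nlinarith [hxx, (id_eq x : id x = x)]

lemma contG : Continuous Gfun :=
  (Real.continuous_sqrt.sub continuous_const).mul ((continuous_const.mul Real.continuous_sqrt).rexp)

lemma contH : Continuous Hfun :=
  continuous_const.mul (continuous_id.mul Real.continuous_sqrt)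

lemma stepG (a : ℝ) (ha : 0 ≤ a) : Real.exp (2 * Real.sqrt a) ≤ Gfun (a+1) - Gfun a := by
  have hlt : a < a + 1 := lt_add_one a
  obtain ⟨c, hc, hceq⟩ := exists_hasDerivAt_eq_slope Gfun (fun y => Real.exp (2 * Real.sqrt y))
    hlt contG.continuousOn (fun y hy => derivG (lt_of_le_of_lt ha hy.1))
  have : Real.exp (2 * Real.sqrt c) = Gfun (a+1) - Gfun a := by
    rw [hceq]; field_simp; ring
  rw [← this]
  have : Real.sqrt a ≤ Real.sqrt c := Real.sqrt_le_sqrt hc.1.le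
  gcongr

lemma stepH (a : ℝ) (ha : 0 ≤ a) : Hfun (a+1) - Hfun a ≤ Real.sqrt (a+1) := by
  have hlt : a < a + 1 := lt_add_one a
  obtain ⟨c, hc, hceq⟩ := exists_hasDerivAt_eq_slope Hfun (fun y => Real.sqrt y)
    hlt contH.continuousOn (fun y hy => derivH (lt_of_le_of_lt ha hy.1))
  have h1 : Real.sqrt c = Hfun (a+1) - Hfun a := by rw [hceq]; field_simp; ring
  rw [← h1]
  exact Real.sqrt_le_sqrt hc.2.le

lemma sumG (m : ℕ) : ∑ i ∈ Finset.range m, Real.exp (2 * Real.sqrt i) ≤ Gfun m + 1/2 := by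
  induction m with
  | zero => simp [Gfun]
  | succ k ih =>
    rw [Finset.sum_range_succ]
    have := stepG k (Nat.cast_nonneg k)
    push_cast
    push_cast at ih this
    linarith

lemma sumH (m : ℕ) : Hfun m ≤ ∑ i ∈ Finset.range (m+1), Real.sqrt i := by
  induction m with
  | zero => simp [Hfun]
  | succ k ih =>
    rw [Finset.sum_range_succ]
    have := stepH k (Nat.cast_nonneg k)
    push_cast
    push_cast at ih this
    linarith

lemma expquad (t : ℝ) (ht : 0 ≤ t) : Real.exp (-t) ≤ 1 - t + t^2/2 := by
  have h := Real.sum_le_exp_of_nonneg ht 3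
  simp [Finset.sum_range_succ] at h
  have h2 : 1 + t + t^2/2 ≤ Real.exp t := by
    nlinarith [h]
  have hpos : (0:ℝ) < Real.exp t := Real.exp_pos t
  rw [Real.exp_neg]
  rw [inv_le_iff_one_le_mul₀ hpos] -- maybe wrong name
  nlinarith [sq_nonneg (t^2), sq_nonneg t]


lemma keyineq (s t E : ℝ) (hs : 1 ≤ s) (ht : 1 ≤ t) (hE : 0 < E)
    (h1 : s*s = t*t + 1) (h2 : 2 ≤ t*t) :
    E*(1 - 1/s + 1/(2*(s*s))) - t + (1/(s*s))*((s - 1/2)*E + 1/2 - (2/3)*(t*t)*t - s*s)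
      ≤ E - s - 1 := by
  have hs0 : (0:ℝ) < s := by linarith
  have ht0 : (0:ℝ) < t := by linarith
  have hstle : t ≤ s := by nlinarith
  have h2t : 2*t*(s - t) ≤ 1 := by nlinarith
  have hEeq : E*(1 - 1/s + 1/(2*(s*s))) + (1/(s*s))*((s - 1/2)*E) = E := by
    field_simp; ring
  have hrest : - t + (1/(s*s))*(1/2 - (2/3)*(t*t)*t - s*s) ≤ - s - 1 := by
    have hkey : (1/2 - (2/3)*(t*t)*t - s*s) ≤ (s*s) * (t - s - 1) := by
      nlinarith [mul_le_mul_of_nonneg_left h2t (by positivity : (0:ℝ) ≤ t*t+1), sq_nonneg t,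
        mul_pos ht0 ht0, mul_le_mul_of_nonneg_left h2 (le_of_lt (mul_pos ht0 ht0))]
    have h5 : (1/(s*s))*(1/2 - (2/3)*(t*t)*t - s*s) ≤ (1/(s*s))*((s*s) * (t - s - 1)) :=
      mul_le_mul_of_nonneg_left hkey (by positivity)
    have h6 : (1/(s*s))*((s*s) * (t - s - 1)) = t - s - 1 := by
      field_simp
    linarith
  have hsplit : E*(1 - 1/s + 1/(2*(s*s))) - t + (1/(s*s))*((s - 1/2)*E + 1/2 - (2/3)*(t*t)*t - s*s)
      = (E*(1 - 1/s + 1/(2*(s*s))) + (1/(s*s))*((s - 1/2)*E))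
        + (- t + (1/(s*s))*(1/2 - (2/3)*(t*t)*t - s*s)) := by ring
  rw [hsplit, hEeq]
  linarith



lemma expC (x : ℝ) (hx : 1 ≤ x) :
    Real.exp (2*Real.sqrt (x-1)) ≤ Real.exp (2*Real.sqrt x) * (1 - 1/Real.sqrt x + 1/(2*x)) := by
  set s := Real.sqrt x with hsdef
  have hx0 : (0:ℝ) ≤ x := by linarith
  have hss : s*s = x := Real.mul_self_sqrt hx0
  have hs1 : 1 ≤ s := by
    rw [hsdef]
    exact Real.one_le_sqrt.mpr hx
  have hs0 : (0:ℝ) < s := by linarith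
  have hsu : s * (1/(2*s)) = 1/2 := by field_simp
  have h1 : Real.sqrt (x-1) ≤ s - 1/(2*s) := by
    have hnn : (0:ℝ) ≤ s - 1/(2*s) := by nlinarith
    have h2 : s - 1/(2*s) = Real.sqrt ((s - 1/(2*s))^2) := (Real.sqrt_sq hnn).symm
    rw [h2]
    apply Real.sqrt_le_sqrt
    nlinarith [sq_nonneg (1/(2*s))]
  have h3 : Real.exp (2*Real.sqrt (x-1)) ≤ Real.exp (2*s) * Real.exp (-(1/s)) := by
    rw [← Real.exp_add]
    apply Real.exp_le_exp.mpr
    have : 1/(2*s) + 1/(2*s) = 1/s := by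
      rw [div_add_div _ _ (by positivity) (by positivity : (2:ℝ)*s ≠ 0)]
      rw [div_eq_div_iff (by positivity) (by positivity)]
      ring
    linarith
  have h4 : Real.exp (-(1/s)) ≤ 1 - 1/s + (1/s)^2/2 := expquad (1/s) (by positivity)
  have h5 : (1/s)^2/2 = 1/(2*x) := by
    rw [← hss]; field_simp
  calc Real.exp (2*Real.sqrt (x-1)) ≤ Real.exp (2*s) * Real.exp (-(1/s)) := h3
    _ ≤ Real.exp (2*s) * (1 - 1/s + (1/s)^2/2) := by
        apply mul_le_mul_of_nonneg_left h4 (le_of_lt (Real.exp_pos _))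
    _ = Real.exp (2*s) * (1 - 1/s + 1/(2*x)) := by rw [h5]

lemma expquad2 (t : ℝ) (ht : 0 ≤ t) : 1 + t + t^2/2 ≤ Real.exp t := by
  have h := Real.sum_le_exp_of_nonneg ht 3
  simp [Finset.sum_range_succ] at h
  nlinarith [h]

theorem stmt1 (Φ : ℕ → ℝ) (h0 : Φ 0 = 0)
    (hrec : ∀ n : ℕ, 1 ≤ n →
      Φ n ≤ Φ (n - 1) + 1 + (1 / (n : ℝ)) * ∑ i ∈ Finset.range n, Φ i) :
    ∀ n : ℕ, Φ n ≤ Real.exp (2 * Real.sqrt n) := by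
  have key : ∀ n : ℕ, Φ n ≤ Real.exp (2 * Real.sqrt n) - Real.sqrt n - 1 := by
    intro n
    induction n using Nat.strong_induction_on with
    | _ n ih =>
      have hΦ1 : Φ 1 ≤ 1 := by
        have h := hrec 1 le_rfl
        simpa [h0] using h
      match n, ih with
      | 0, _ => norm_num [h0]
      | 1, _ =>
        rw [show ((1:ℕ):ℝ) = 1 by norm_num, Real.sqrt_one, mul_one]
        linarith [Real.add_one_le_exp 2, hΦ1]
      | 2, _ =>
        have h2 := hrec 2 (by norm_num)
        rw [Finset.sum_range_succ, Finset.sum_range_one] at h2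
        rw [show ((2:ℕ):ℝ) = 2 by norm_num]
        have h22 : Real.sqrt 2 * Real.sqrt 2 = 2 := Real.mul_self_sqrt (by norm_num)
        have hnn : 0 ≤ Real.sqrt 2 := Real.sqrt_nonneg 2
        have hexp := expquad2 (2*Real.sqrt 2) (by positivity)
        nlinarith [hexp, h2, hΦ1]
      | (k+3), ih =>
        have hk0 : (0:ℝ) ≤ (k:ℝ) := Nat.cast_nonneg k
        set s := Real.sqrt ((k:ℝ)+3) with hsdef
        set t := Real.sqrt ((k:ℝ)+2) with htdef
        have hss : s*s = (k:ℝ)+3 := Real.mul_self_sqrt (by linarith)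
        have htt : t*t = (k:ℝ)+2 := Real.mul_self_sqrt (by linarith)
        have hs1 : 1 ≤ s := by rw [hsdef]; exact Real.one_le_sqrt.mpr (by linarith)
        have ht1 : 1 ≤ t := by rw [htdef]; exact Real.one_le_sqrt.mpr (by linarith)
        have hE : (0:ℝ) < Real.exp (2*s) := Real.exp_pos _
        -- recurrence at k+3
        have h := hrec (k+3) (by omega)
        simp only [show k+3-1 = k+2 from rfl] at h
        push_cast at h
        -- bound on the previous term
        have hprev : Φ (k+2) ≤ Real.exp (2*t) - t - 1 := by
          have := ih (k+2) (by omega)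
          push_cast at this
          exact this
        have hC : Real.exp (2*t) ≤ Real.exp (2*s) * (1 - 1/s + 1/(2*((k:ℝ)+3))) := by
          have h' := expC ((k:ℝ)+3) (by linarith)
          rw [show (k:ℝ)+3-1 = (k:ℝ)+2 by ring] at h'
          exact h'
        -- bound on the sum of Φ
        have hterm : ∀ i ∈ Finset.range (k+3),
            Φ i ≤ Real.exp (2*Real.sqrt i) - Real.sqrt i - 1 :=
          fun i hi => ih i (Finset.mem_range.mp hi)
        have hsum1 := Finset.sum_le_sum hterm
        have hsum2 : ∑ i ∈ Finset.range (k+3), (Real.exp (2*Real.sqrt i) - Real.sqrt i - 1)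
            = (∑ i ∈ Finset.range (k+3), Real.exp (2*Real.sqrt i))
              - (∑ i ∈ Finset.range (k+3), Real.sqrt i) - ((k:ℝ)+3) := by
          rw [Finset.sum_sub_distrib, Finset.sum_sub_distrib, Finset.sum_const,
            Finset.card_range]
          push_cast; ring
        have hA : ∑ i ∈ Finset.range (k+3), Real.exp (2*Real.sqrt i)
            ≤ (s - 1/2) * Real.exp (2*s) + 1/2 := by
          have := sumG (k+3)
          push_cast at this
          simpa [Gfun, hsdef] using this
        have hB : (2/3)*(t*t)*t ≤ ∑ i ∈ Finset.range (k+3), Real.sqrt i := by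
          have := sumH (k+2)
          push_cast at this
          rw [show (2:ℝ)/3*(t*t)*t = (2/3)*((t*t)*t) by ring, htt]
          simpa [Hfun, htdef] using this
        have hΦsum : ∑ i ∈ Finset.range (k+3), Φ i
            ≤ (s - 1/2) * Real.exp (2*s) + 1/2 - (2/3)*(t*t)*t - ((k:ℝ)+3) := by
          rw [hsum2] at hsum1
          linarith
        have hmul : (1/((k:ℝ)+3)) * ∑ i ∈ Finset.range (k+3), Φ i
            ≤ (1/((k:ℝ)+3)) * ((s - 1/2) * Real.exp (2*s) + 1/2 - (2/3)*(t*t)*t - ((k:ℝ)+3)) :=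
          mul_le_mul_of_nonneg_left hΦsum (by positivity)
        have hkey := keyineq s t (Real.exp (2*s)) hs1 ht1 hE (by linarith)
          (by rw [htt]; linarith)
        rw [hss] at hkey
        push_cast
        linarith [h, hprev, hC, hmul, hkey]
  intro n
  have h1 := key n
  have h2 : 0 ≤ Real.sqrt n := Real.sqrt_nonneg _
  linarith
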